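/- If |f|² is exponentially distributed with mean ρ·σ² (i.e., f is circularly-symmetric complex Gaussian with variance ρσ²), then E[log(1 + |f|²/σ²)] = e^{1/ρ} E₁(1/ρ), where E₁ is the exponential integral. -/

import Mathlib

open MeasureTheory Set

open Real Filter Topology in
lemma shift_Ioi (g : ℝ → ℝ) (a k : ℝ) :
    ∫ x in Ioi a, g (x + k) = ∫ t in Ioi (a + k), g t := by
  rw [← integral_indicator measurableSet_Ioi, ← integral_indicator measurableSet_Ioi,
    ← integral_add_right_eq_self (Set.indicator (Ioi (a + k)) g) k]
  congr 1
  ext x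
  simp [Set.indicator_apply, add_lt_add_iff_right]


open Real Filter Topology in
lemma key_integral (ρ σ2 : ℝ) (hρ : 0 < ρ) (hσ2 : 0 < σ2) :
    ∫ x in Ioi (0:ℝ), (1 / (ρ * σ2)) * Real.exp (-x / (ρ * σ2)) * Real.log (1 + x / σ2)
      = Real.exp (1 / ρ) * ∫ t in Set.Ioi (1/ρ), Real.exp (-t) / t := by
  set c := ρ * σ2 with hcdef
  have hc : 0 < c := mul_pos hρ hσ2
  have hci : 0 < c⁻¹ := inv_pos.mpr hc
  -- integrability of exp(-x/c)/(σ2+x) on Ioi 0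
  have hI1 : IntegrableOn (fun x => Real.exp (-x / c) / (σ2 + x)) (Ioi 0) := by
    have hg : Integrable (fun x : ℝ => (1 / σ2) * Real.exp (-c⁻¹ * x))
        (volume.restrict (Ioi 0)) := (exp_neg_integrableOn_Ioi 0 hci).const_mul _
    refine hg.mono ?_ ?_
    · refine ContinuousOn.aestronglyMeasurable ?_ measurableSet_Ioi
      refine ContinuousOn.div (by fun_prop) (by fun_prop) ?_
      intro x hx; have : (0:ℝ) < x := hx; positivity
    · filter_upwards [ae_restrict_mem measurableSet_Ioi] with x hx
      have hx0 : (0:ℝ) < x := hx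
      rw [Real.norm_eq_abs, Real.norm_eq_abs, abs_of_nonneg (by positivity),
        abs_of_nonneg (by positivity)]
      rw [show -c⁻¹ * x = -x / c by field_simp]
      rw [div_le_iff₀ (by positivity), one_div, mul_comm (σ2⁻¹), mul_assoc]
      have h1 : Real.exp (-x/c) * (σ2⁻¹ * (σ2 + x)) = Real.exp (-x/c) * (1 + x/σ2) := by
        field_simp
      rw [h1]
      nlinarith [Real.exp_pos (-x/c), div_nonneg hx0.le hσ2.le]
  -- integrability of (1/c) exp(-x/c) log(1+x/σ2) on Ioi 0
  have hI2 : IntegrableOn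
      (fun x => 1 / c * Real.exp (-x / c) * Real.log (1 + x / σ2)) (Ioi 0) := by
    have base : IntegrableOn (fun x : ℝ => x ^ (1:ℝ) * Real.exp (-c⁻¹ * x ^ (1:ℝ)))
        (Ioi 0) := integrableOn_rpow_mul_exp_neg_mul_rpow (by norm_num) one_pos hci
    have hg : Integrable (fun x : ℝ => (1 / (c * σ2)) *
        (x ^ (1:ℝ) * Real.exp (-c⁻¹ * x ^ (1:ℝ)))) (volume.restrict (Ioi 0)) :=
      base.const_mul _
    refine hg.mono ?_ ?_
    · refine ContinuousOn.aestronglyMeasurable ?_ measurableSet_Ioi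
      refine ContinuousOn.mul (by fun_prop) ?_
      refine ContinuousOn.log (by fun_prop) ?_
      intro x hx; have : (0:ℝ) < x := hx; positivity
    · filter_upwards [ae_restrict_mem measurableSet_Ioi] with x hx
      have hx0 : (0:ℝ) < x := hx
      have hL0 : 0 ≤ Real.log (1 + x / σ2) :=
        Real.log_nonneg (by nlinarith [div_nonneg hx0.le hσ2.le])
      have hLle : Real.log (1 + x / σ2) ≤ x / σ2 := by
        have := Real.log_le_sub_one_of_pos (show (0:ℝ) < 1 + x / σ2 by positivity)
        linarith
      rw [Real.norm_eq_abs, Real.norm_eq_abs, abs_of_nonneg (by positivity),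
        abs_of_nonneg (by positivity), Real.rpow_one,
        show -c⁻¹ * x = -x / c by field_simp]
      rw [show 1 / (c * σ2) * (x * Real.exp (-x/c))
          = 1 / c * Real.exp (-x/c) * (x / σ2) by field_simp]
      have : 0 ≤ 1 / c * Real.exp (-x/c) := by positivity
      nlinarith
  -- IBP
  have hF0 : Real.log (1 + 0 / σ2) = 0 := by norm_num
  have hderiv : ∀ x ∈ Ici (0:ℝ),
      HasDerivAt (fun y => -(Real.log (1 + y / σ2) * Real.exp (-y / c)))
        (1 / c * Real.exp (-x / c) * Real.log (1 + x / σ2)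
          - Real.exp (-x / c) / (σ2 + x)) x := by
    intro x hx
    have hx0 : (0:ℝ) ≤ x := hx
    have h1 : HasDerivAt (fun y : ℝ => 1 + y / σ2) (1 / σ2) x := by
      simpa using ((hasDerivAt_id x).div_const σ2).const_add 1
    have h2 : HasDerivAt (fun y => Real.log (1 + y / σ2))
        ((1 / σ2) / (1 + x / σ2)) x := h1.log (by positivity)
    have h3 : HasDerivAt (fun y : ℝ => Real.exp (-y / c))
        (Real.exp (-x / c) * (-1 / c)) x := by
      have : HasDerivAt (fun y : ℝ => -y / c) (-1 / c) x := by
        simpa using ((hasDerivAt_id x).neg.div_const c)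
      exact this.exp
    have h4 := (h2.mul h3).neg
    refine h4.congr_deriv ?_
    have hs : σ2 + x ≠ 0 := by positivity
    have hs2 : 1 + x / σ2 ≠ 0 := by positivity
    field_simp
    ring
  have hlim : Tendsto (fun x => -(Real.log (1 + x / σ2) * Real.exp (-x / c)))
      atTop (𝓝 0) := by
    rw [show (0:ℝ) = -0 by norm_num]
    apply Tendsto.neg
    have hup : Tendsto (fun x : ℝ => (1/σ2) * (x ^ (1:ℝ) * Real.exp (-c⁻¹ * x)))
        atTop (𝓝 ((1/σ2) * 0)) :=
      (tendsto_rpow_mul_exp_neg_mul_atTop_nhds_zero 1 c⁻¹ hci).const_mul _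
    rw [mul_zero] at hup
    refine tendsto_of_tendsto_of_tendsto_of_le_of_le' tendsto_const_nhds hup ?_ ?_
    · filter_upwards [eventually_ge_atTop (0:ℝ)] with x hx0
      have hL0 : 0 ≤ Real.log (1 + x / σ2) :=
        Real.log_nonneg (by nlinarith [div_nonneg hx0 hσ2.le])
      positivity
    · filter_upwards [eventually_gt_atTop (0:ℝ)] with x hx0
      have hLle : Real.log (1 + x / σ2) ≤ x / σ2 := by
        have := Real.log_le_sub_one_of_pos (show (0:ℝ) < 1 + x / σ2 by positivity)
        linarith
      rw [Real.rpow_one, show -c⁻¹ * x = -x / c by field_simp]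
      have he : 0 < Real.exp (-x / c) := Real.exp_pos _
      rw [show (1:ℝ)/σ2 * (x * Real.exp (-x/c)) = (x/σ2) * Real.exp (-x/c) by ring]
      nlinarith
  have hFTC := integral_Ioi_of_hasDerivAt_of_tendsto' hderiv (hI2.sub hI1) hlim
  rw [integral_sub hI2 hI1] at hFTC
  simp only [hF0, zero_mul, neg_zero, sub_zero] at hFTC
  have hIBP : (∫ x in Ioi (0:ℝ), 1 / c * Real.exp (-x / c) * Real.log (1 + x / σ2))
      = ∫ x in Ioi (0:ℝ), Real.exp (-x / c) / (σ2 + x) := by linarith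
  rw [hIBP]
  -- substitution
  have hsre : σ2 / c = 1 / ρ := by rw [hcdef]; field_simp
  have hsub : (∫ x in Ioi (0:ℝ), Real.exp (-x / c) / (σ2 + x))
      = ∫ x in Ioi (0:ℝ), (fun y => 1 / c * (Real.exp (1/ρ) *
          (Real.exp (-(y + 1/ρ)) / (y + 1/ρ)))) (c⁻¹ * x) := by
    refine setIntegral_congr_fun measurableSet_Ioi fun x hx => ?_
    have hx0 : (0:ℝ) < x := hx
    have h1 : c⁻¹ * x + 1/ρ = (σ2 + x) / c := by
      rw [← hsre]; field_simp; ring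
    simp only [h1]
    have he : Real.exp (1/ρ) * Real.exp (-((σ2 + x)/c)) = Real.exp (-x/c) := by
      rw [← Real.exp_add]; congr 1; rw [← hsre]; field_simp; ring
    rw [← mul_div_assoc, he, div_div_eq_mul_div]
    field_simp
  have h2 := integral_comp_mul_left_Ioi
    (fun y => 1 / c * (Real.exp (1/ρ) * (Real.exp (-(y + 1/ρ)) / (y + 1/ρ)))) 0 hci
  rw [hsub, h2]
  simp only [mul_zero, inv_inv, smul_eq_mul]
  rw [integral_const_mul, integral_const_mul]
  have hs : (∫ x in Ioi (0:ℝ), Real.exp (-(x + 1/ρ)) / (x + 1/ρ))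
      = ∫ t in Ioi ((0:ℝ) + 1/ρ), Real.exp (-t) / t := shift_Ioi (fun t => Real.exp (-t) / t) 0 (1/ρ)
  rw [hs, zero_add]
  field_simp

/-- The exponential integral `E₁(ξ) = ∫_ξ^∞ e^{-t}/t dt`. -/
noncomputable def expInt (ξ : ℝ) : ℝ := ∫ t in Set.Ioi ξ, Real.exp (-t) / t

open Real Filter Topology in
open scoped ENNReal NNReal in
/-- If `X = |f|²` is exponentially distributed with mean `ρσ²` (density
`(1/(ρσ²)) e^{-x/(ρσ²)}` on `x ≥ 0`), then
`E[log(1 + X/σ²)] = e^{1/ρ} E₁(1/ρ)`. -/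
theorem ergodic_capacity_rayleigh
    {Ω : Type*} [MeasureSpace Ω] (ℙ : Measure Ω) [IsProbabilityMeasure ℙ]
    (X : Ω → ℝ) (hX : Measurable X) (ρ σ2 : ℝ) (hρ : 0 < ρ) (hσ2 : 0 < σ2)
    (hlaw : Measure.map X ℙ
      = MeasureTheory.volume.withDensity (fun x =>
          ENNReal.ofReal
            (if 0 ≤ x then (1 / (ρ * σ2)) * Real.exp (-x / (ρ * σ2)) else 0))) :
    ∫ ω, Real.log (1 + X ω / σ2) ∂ℙ = Real.exp (1 / ρ) * expInt (1 / ρ) := by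
  have hc : 0 < ρ * σ2 := mul_pos hρ hσ2
  set d : ℝ → ℝ := fun x =>
    if 0 ≤ x then (1 / (ρ * σ2)) * Real.exp (-x / (ρ * σ2)) else 0 with hd_def
  have hd_meas : Measurable d := by
    apply Measurable.ite measurableSet_Ici <;> fun_prop
  have hd_nonneg : ∀ x, 0 ≤ d x := by
    intro x; rw [hd_def]; dsimp only; split <;> positivity
  have hgm : Measurable fun x : ℝ => Real.log (1 + x / σ2) :=
    Real.measurable_log.comp (by fun_prop)
  have h1 : ∫ ω, Real.log (1 + X ω / σ2) ∂ℙ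
      = ∫ x, Real.log (1 + x / σ2) ∂(Measure.map X ℙ) :=
    (integral_map hX.aemeasurable hgm.aestronglyMeasurable).symm
  rw [h1, hlaw]
  have hmeq : (fun x => ENNReal.ofReal (d x))
      = fun x => ((d x).toNNReal : ℝ≥0∞) := rfl
  have hnn_meas : Measurable fun x => (d x).toNNReal :=
    measurable_real_toNNReal.comp hd_meas
  rw [show (fun x : ℝ => ENNReal.ofReal
        (if 0 ≤ x then (1 / (ρ * σ2)) * Real.exp (-x / (ρ * σ2)) else 0))
      = fun x => ((d x).toNNReal : ℝ≥0∞) from rfl,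
    integral_withDensity_eq_integral_smul hnn_meas]
  have hpt : ∀ x : ℝ, (d x).toNNReal • Real.log (1 + x / σ2)
      = (Ioi (0:ℝ)).indicator
          (fun x => (1 / (ρ * σ2)) * Real.exp (-x / (ρ * σ2)) * Real.log (1 + x / σ2)) x := by
    intro x
    rw [NNReal.smul_def, Real.coe_toNNReal _ (hd_nonneg x), hd_def]
    dsimp only
    rcases lt_trichotomy x 0 with h | h | h
    · rw [if_neg (not_le.mpr h), indicator_of_notMem (by simp [h.not_gt])]
      simp
    · subst h
      simp
    · rw [if_pos h.le, Set.indicator_of_mem (Set.mem_Ioi.mpr h)]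
      exact smul_eq_mul _ _
  simp_rw [hpt]
  rw [integral_indicator measurableSet_Ioi]
  simpa [expInt] using key_integral ρ σ2 hρ hσ2
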